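/- If t : ℝⁿ → ℝⁿ is a measurable map satisfying |t(x) − t(y)| ≥ c|x − y| for almost every x, y ∈ ℝⁿ (some c > 0), then for every p ∈ [1, ∞] the composition map u ↦ u ∘ t is bounded on L^p(ℝⁿ), with operator norm depending only on n, c, and p. -/

import Mathlib

open MeasureTheory
open scoped ENNReal

/-- If `t : ℝⁿ → ℝⁿ` is measurable and satisfies `|t x − t y| ≥ c|x − y|` for a.e.
pairs `x, y`, then for every `p ∈ [1, ∞]` the composition `u ↦ u ∘ t` is bounded on
`L^p(ℝⁿ)` (with operator norm depending only on `n`, `c`, `p`). -/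
theorem composition_bounded_on_Lp (n : ℕ) (c : ℝ) (hc : 0 < c)
    (t : EuclideanSpace ℝ (Fin n) → EuclideanSpace ℝ (Fin n))
    (ht : Measurable t)
    (hexp : ∀ᵐ p ∂((volume : Measure (EuclideanSpace ℝ (Fin n))).prod volume),
      c * ‖p.1 - p.2‖ ≤ ‖t p.1 - t p.2‖) :
    ∀ p : ℝ≥0∞, 1 ≤ p → ∃ C : ℝ≥0∞, C ≠ ⊤ ∧
      ∀ u : EuclideanSpace ℝ (Fin n) → ℝ, MemLp u p volume →
        eLpNorm (u ∘ t) p volume ≤ C * eLpNorm u p volume := by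
  set μ : Measure (EuclideanSpace ℝ (Fin n)) := volume with hμ
  set ν : Measure (EuclideanSpace ℝ (Fin n)) := μ.map t with hν
  set K : ℝ≥0∞ := ENNReal.ofReal ((2 / c) ^ n) with hK
  have hcne : c ≠ 0 := hc.ne'
  have h2c : (0:ℝ) < 2 / c := by positivity
  -- the key ball estimate
  have hball : ∀ (x : EuclideanSpace ℝ (Fin n)) (r : ℝ), 0 < r →
      ν (Metric.closedBall x r) ≤ K * μ (Metric.closedBall x r) := by
    intro x r hr
    rw [hν, Measure.map_apply ht measurableSet_closedBall]
    set P : Set (EuclideanSpace ℝ (Fin n)) := t ⁻¹' Metric.closedBall x r with hP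
    by_cases h0 : μ P = 0
    · rw [h0]; exact zero_le
    · have hAE : ∀ᵐ a ∂μ, ∀ᵐ b ∂μ, c * ‖a - b‖ ≤ ‖t a - t b‖ :=
        Measure.ae_ae_of_ae_prod hexp
      -- pick a good point `a` in `P`
      obtain ⟨a, haP, ha⟩ : ∃ a ∈ P, ∀ᵐ b ∂μ, c * ‖a - b‖ ≤ ‖t a - t b‖ := by
        have h1 : μ (P ∩ {a | ∀ᵐ b ∂μ, c * ‖a - b‖ ≤ ‖t a - t b‖}) ≠ 0 := by
          rwa [measure_inter_conull hAE]
        obtain ⟨a, ha1, ha2⟩ := nonempty_of_measure_ne_zero h1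
        exact ⟨a, ha1, ha2⟩
      have hsub : μ P ≤ μ (Metric.closedBall a (2 * r / c)) := by
        refine measure_mono_ae ?_
        filter_upwards [ha] with b hb
        intro hbP
        have h1 : ‖t a - t b‖ ≤ 2 * r := by
          have h2 := dist_triangle (t a) x (t b)
          have h3 : dist (t a) x ≤ r := haP
          have h4 : dist x (t b) ≤ r := by
            rw [dist_comm]; exact hbP
          rw [← dist_eq_norm]
          linarith
        have h5 : ‖a - b‖ ≤ 2 * r / c := by
          rw [le_div_iff₀ hc, mul_comm]
          exact hb.trans h1
        have : dist b a ≤ 2 * r / c := by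
          rw [dist_comm, dist_eq_norm]; exact h5
        exact this
      have e1 : μ (Metric.closedBall a (2 * r / c))
          = ENNReal.ofReal ((2 * r / c) ^ n) * μ (Metric.ball 0 1) := by
        rw [Measure.addHaar_closedBall μ a (by positivity)]
        congr 2
        simp [finrank_euclideanSpace_fin]
      have e2 : μ (Metric.closedBall x r)
          = ENNReal.ofReal (r ^ n) * μ (Metric.ball 0 1) := by
        rw [Measure.addHaar_closedBall μ x hr.le]
        congr 2
        simp [finrank_euclideanSpace_fin]
      have e3 : ((2 * r / c) ^ n : ℝ) = (2 / c) ^ n * r ^ n := by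
        rw [← mul_pow]
        congr 1
        field_simp
      calc μ P ≤ μ (Metric.closedBall a (2 * r / c)) := hsub
        _ = ENNReal.ofReal ((2 * r / c) ^ n) * μ (Metric.ball 0 1) := e1
        _ = K * (ENNReal.ofReal (r ^ n) * μ (Metric.ball 0 1)) := by
            rw [e3, ENNReal.ofReal_mul (by positivity), hK, mul_assoc]
        _ = K * μ (Metric.closedBall x r) := by rw [e2]
  -- deduce the measure inequality via the Besicovitch covering theorem
  have hKμ : IsLocallyFiniteMeasure (K • μ) := by
    constructor
    intro x
    obtain ⟨U, hU, hfin⟩ := (μ.finiteAt_nhds x).exists_mem_basis (Filter.basis_sets _)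
    refine ⟨U, hU, ?_⟩
    simp only [Measure.smul_apply, smul_eq_mul]
    exact ENNReal.mul_lt_top (by simp [hK]) hfin
  have hle : ν ≤ K • μ := by
    refine Measure.le_intro fun s hs _ => ?_
    refine (Besicovitch.vitaliFamily ν).measure_le_of_frequently_le (K • μ)
      Measure.AbsolutelyContinuous.rfl s fun x _ => ?_
    have hev : ∀ᶠ r in nhdsWithin (0:ℝ) (Set.Ioi 0),
        ν (Metric.closedBall x r) ≤ (K • μ) (Metric.closedBall x r) := by
      filter_upwards [self_mem_nhdsWithin] with r hr
      simpa [Measure.smul_apply, smul_eq_mul] using hball x r hr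
    exact (Besicovitch.tendsto_filterAt ν x).frequently hev.frequently
  have hac : ν ≪ μ :=
    Measure.absolutelyContinuous_of_le_smul hle
  intro p hp
  have hp0 : p ≠ 0 := by
    intro h; simp [h] at hp
  have hK0 : K ≠ 0 := by
    simp [hK, ENNReal.ofReal_eq_zero, not_le]
    positivity
  refine ⟨K ^ (1 / p).toReal, ENNReal.rpow_ne_top_of_nonneg ENNReal.toReal_nonneg
    (by simp [hK]), fun u hu => ?_⟩
  have hum : AEStronglyMeasurable u ν := hu.1.mono_ac hac
  calc eLpNorm (u ∘ t) p μ = eLpNorm u p ν :=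
        (eLpNorm_map_measure hum ht.aemeasurable).symm
    _ ≤ eLpNorm u p (K • μ) := eLpNorm_mono_measure u hle
    _ = K ^ (1 / p).toReal * eLpNorm u p μ := by
        rw [eLpNorm_smul_measure_of_ne_zero hK0, smul_eq_mul]
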